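/- Let G be a 3-colorable almost good graph with a fixed vertex v0 and associated partition V(G) = T_G ∪ M_G ∪ B_G, and let G1 = G ∪ {ab} for some non-edge ab of G with a ∈ T_G, where G1 is 3-colorable. If there exists a vertex x ≠ a such that Γ_{G1}(x) ≠ Γ_G(x), then b ∈ B_G, b ≠ x, and there exists an edge ub of G with u ∈ V(Γ_G(x)). -/

import Mathlib

open SimpleGraph

/-- The graph obtained from `G` by adding the edge `e`. -/
def addEdge {V : Type*} (G : SimpleGraph V) (e : Sym2 V) : SimpleGraph V :=
  G ⊔ SimpleGraph.fromEdgeSet {e}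

/-- Top vertices: the vertices receiving the same color as `v0` in every proper
3-coloring of `G`. -/
def topSet {V : Type*} (G : SimpleGraph V) (v0 : V) : Set V :=
  {x | ∀ c : G.Coloring (Fin 3), c x = c v0}

/-- Middle vertices: the vertices outside the top having a neighbor in the top. -/
def midSet {V : Type*} (G : SimpleGraph V) (v0 : V) : Set V :=
  {x | x ∉ topSet G v0 ∧ ∃ t ∈ topSet G v0, G.Adj x t}

/-- Bottom vertices: all remaining vertices. -/
def bottomSet {V : Type*} (G : SimpleGraph V) (v0 : V) : Set V :=
  {x | x ∉ topSet G v0 ∧ x ∉ midSet G v0}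

/-- The vertex set of `Γ_G(u)`, the connected component of `u` in the subgraph of `G`
induced on `{u} ∪ M_G`: all vertices reachable from `u` by a walk staying inside
`{u} ∪ M_G`. -/
def gammaSet {V : Type*} (G : SimpleGraph V) (v0 u : V) : Set V :=
  {w | ∃ p : G.Walk u w, ∀ z ∈ p.support, z ∈ insert u (midSet G v0)}

/-- `m` and `m'` lie in the same middle-component of `G` (a connected component of the
subgraph induced on `M_G`): they are joined by a walk staying inside `M_G`. -/
def midReach {V : Type*} (G : SimpleGraph V) (v0 : V) (m m' : V) : Prop :=
  ∃ p : G.Walk m m', ∀ z ∈ p.support, z ∈ midSet G v0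

/-- Property (P1): the bottom `B_G` is an independent set in `G`. -/
def prop1 {V : Type*} (G : SimpleGraph V) (v0 : V) : Prop :=
  ∀ u ∈ bottomSet G v0, ∀ v ∈ bottomSet G v0, ¬ G.Adj u v

/-- Property (P2): every middle-component of `G` has at most one attached bottom
vertex. -/
def prop2 {V : Type*} (G : SimpleGraph V) (v0 : V) : Prop :=
  ∀ u v m m' : V, u ∈ bottomSet G v0 → v ∈ bottomSet G v0 →
    m ∈ midSet G v0 → m' ∈ midSet G v0 →
    G.Adj u m → G.Adj v m' → midReach G v0 m m' → u = v

/-- `G` is good: it satisfies properties (P1) and (P2). -/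
def goodGraph {V : Type*} (G : SimpleGraph V) (v0 : V) : Prop :=
  prop1 G v0 ∧ prop2 G v0

/-- The bad pairs `BAD_G`: the pairs `uv` such that there exist distinct bottom vertices
`x ≠ y` with `u ∈ V(Γ_G(x))` and `v ∈ V(Γ_G(y))`. -/
def badPair {V : Type*} (G : SimpleGraph V) (v0 : V) (e : Sym2 V) : Prop :=
  ∃ u v x y : V, e = s(u, v) ∧ x ∈ bottomSet G v0 ∧ y ∈ bottomSet G v0 ∧ x ≠ y ∧
    u ∈ gammaSet G v0 x ∧ v ∈ gammaSet G v0 y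

/-- `G` is almost good: `G` is good, or some edge can be removed from `G` so that the
resulting graph is good. -/
def almostGood {V : Type*} (G : SimpleGraph V) (v0 : V) : Prop :=
  goodGraph G v0 ∨ ∃ e ∈ G.edgeSet, goodGraph (G.deleteEdges {e}) v0

section auxLemmas

variable {V : Type*} {G G' : SimpleGraph V} {v0 : V}

/-- Restrict a coloring of a supergraph to a subgraph. -/
def resCol (h : G ≤ G') (c : G'.Coloring (Fin 3)) : G.Coloring (Fin 3) :=
  SimpleGraph.Coloring.mk c (fun hadj => c.valid (h hadj))

lemma topSet_le (h : G ≤ G') : topSet G v0 ⊆ topSet G' v0 := by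
  intro y hy c
  exact hy (resCol h c)

lemma v0_mem_topSet (G : SimpleGraph V) : v0 ∈ topSet G v0 := fun _ => rfl

lemma midSet_le (h : G ≤ G') (hcol : G'.Colorable 3) :
    midSet G v0 ⊆ midSet G' v0 := by
  rintro m ⟨hmT, t, htT, hadj⟩
  refine ⟨?_, t, topSet_le h htT, h hadj⟩
  intro hmT'
  obtain ⟨c⟩ := hcol
  exact c.valid (h hadj) ((hmT' c).trans ((topSet_le h htT) c).symm)

lemma bot_anti (hle' : G' ≤ G) : bottomSet G v0 ⊆ bottomSet G' v0 := by
  rintro u ⟨huT, huM⟩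
  refine ⟨fun h => huT (topSet_le hle' h), ?_⟩
  rintro ⟨h1, t, htT, hadj⟩
  exact huM ⟨huT, t, topSet_le hle' htT, hle' hadj⟩

lemma gammaSet_le (h : G ≤ G') (hcol : G'.Colorable 3) (x : V) :
    gammaSet G v0 x ⊆ gammaSet G' v0 x := by
  rintro w ⟨p, hp⟩
  refine ⟨p.transfer G' (fun e he => (SimpleGraph.edgeSet_mono h) (p.edges_subset_edgeSet he)), ?_⟩
  intro z hz
  rw [SimpleGraph.Walk.support_transfer] at hz
  rcases hp z hz with h1 | h1
  · exact Or.inl h1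
  · exact Or.inr (midSet_le h hcol h1)

lemma addEdge_adj {a b u v : V} (hab : a ≠ b) :
    (addEdge G s(a, b)).Adj u v ↔ G.Adj u v ∨ (u = a ∧ v = b) ∨ (u = b ∧ v = a) := by
  simp only [addEdge, sup_adj, fromEdgeSet_adj, Set.mem_singleton_iff]
  constructor
  · rintro (h | ⟨h, -⟩)
    · exact Or.inl h
    · rcases Sym2.eq_iff.1 h with ⟨rfl, rfl⟩ | ⟨rfl, rfl⟩
      · exact Or.inr (Or.inl ⟨rfl, rfl⟩)
      · exact Or.inr (Or.inr ⟨rfl, rfl⟩)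
  · rintro (h | ⟨rfl, rfl⟩ | ⟨rfl, rfl⟩)
    · exact Or.inl h
    · exact Or.inr ⟨Sym2.eq_iff.2 (Or.inl ⟨rfl, rfl⟩), hab⟩
    · exact Or.inr ⟨Sym2.eq_iff.2 (Or.inr ⟨rfl, rfl⟩), hab.symm⟩

/-- Extend a coloring of `G` with `c b ≠ c v0` to `G + ab`, assuming `a ∈ T_G`. -/
def extendColoring {a b : V} (hab : a ≠ b) (haT : a ∈ topSet G v0)
    (c : G.Coloring (Fin 3)) (hcb : c b ≠ c v0) : (addEdge G s(a, b)).Coloring (Fin 3) :=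
  SimpleGraph.Coloring.mk c (by
    intro u v huv
    rcases (addEdge_adj hab).1 huv with h | ⟨rfl, rfl⟩ | ⟨rfl, rfl⟩
    · exact c.valid h
    · rw [haT c]; exact fun h => hcb h.symm
    · rw [haT c]; exact hcb)

/-- A walk in `G + ab` whose support avoids regions containing `a` transfers to `G`. -/
lemma transferGamma {a b x w : V} (hxa : x ≠ a)
    (haT1 : a ∈ topSet (addEdge G s(a, b)) v0)
    (p : (addEdge G s(a, b)).Walk x w)
    (hp : ∀ z ∈ p.support, z ∈ insert x (midSet (addEdge G s(a, b)) v0)) :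
    ∃ q : G.Walk x w, q.support = p.support := by
  have hanot : a ∉ p.support := by
    intro h
    rcases hp a h with h1 | h1
    · exact hxa h1.symm
    · exact h1.1 haT1
  have hedges : ∀ e ∈ p.edges, e ∈ G.edgeSet := by
    intro e he
    have he1 := p.edges_subset_edgeSet he
    simp only [addEdge, edgeSet_sup, edgeSet_fromEdgeSet, Set.mem_union, Set.mem_diff,
      Set.mem_singleton_iff, Set.mem_setOf_eq] at he1
    rcases he1 with h | ⟨rfl, -⟩
    · exact h
    · exact absurd (SimpleGraph.Walk.fst_mem_support_of_mem_edges p he) hanot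
  exact ⟨p.transfer G hedges, SimpleGraph.Walk.support_transfer p hedges⟩

lemma walk_first_exit {S : Set V} {x w : V} (p : G.Walk x w) :
    x ∈ S → (∃ z ∈ p.support, z ∉ S) →
    ∃ z' z, G.Adj z' z ∧ z ∉ S ∧ z ∈ p.support ∧
      ∃ q : G.Walk x z', ∀ y ∈ q.support, y ∈ S := by
  induction p with
  | nil =>
    intro hx hbad
    obtain ⟨z, hz, hzS⟩ := hbad
    rw [SimpleGraph.Walk.support_nil, List.mem_singleton] at hz
    exact absurd (hz ▸ hx) hzS
  | @cons u y w h p ih =>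
    intro hx hbad
    by_cases hyS : y ∈ S
    · have hbad' : ∃ z ∈ p.support, z ∉ S := by
        obtain ⟨z, hz, hzS⟩ := hbad
        rw [SimpleGraph.Walk.support_cons, List.mem_cons] at hz
        rcases hz with rfl | hz
        · exact absurd hx hzS
        · exact ⟨z, hz, hzS⟩
      obtain ⟨z', z, h1, h2, h3, q, hq⟩ := ih hyS hbad'
      refine ⟨z', z, h1, h2, ?_, SimpleGraph.Walk.cons h q, ?_⟩
      · rw [SimpleGraph.Walk.support_cons]; exact List.mem_cons_of_mem _ h3
      · intro z hz
        rw [SimpleGraph.Walk.support_cons, List.mem_cons] at hz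
        rcases hz with rfl | hz
        · exact hx
        · exact hq z hz
    · refine ⟨u, y, h, hyS, ?_, SimpleGraph.Walk.nil, ?_⟩
      · rw [SimpleGraph.Walk.support_cons]
        exact List.mem_cons_of_mem _ p.start_mem_support
      · intro z hz
        rw [SimpleGraph.Walk.support_nil, List.mem_singleton] at hz
        exact hz ▸ hx

/-- The mixing lemma: in a good graph, recolor `Γ(b)` (for a bottom vertex `b`)
by a second coloring agreeing at `v0`. -/
lemma mixColorings {b : V} (hgood : goodGraph G v0) (hb : b ∈ bottomSet G v0)
    (c1 c2 : G.Coloring (Fin 3)) (hv : c1 v0 = c2 v0) :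
    ∃ c3 : G.Coloring (Fin 3), (∀ w ∈ gammaSet G v0 b, c3 w = c2 w) ∧
      ∀ w ∉ gammaSet G v0 b, c3 w = c1 w := by
  classical
  have hbS : b ∈ gammaSet G v0 b := ⟨SimpleGraph.Walk.nil, by simp⟩
  have hmemS : ∀ {u v : V}, G.Adj u v → u ∈ gammaSet G v0 b → v ∈ midSet G v0 →
      v ∈ gammaSet G v0 b := by
    rintro u v hadj ⟨p, hp⟩ hvm
    refine ⟨p.concat hadj, ?_⟩
    intro y hy
    rw [SimpleGraph.Walk.support_concat, List.mem_append,
      List.mem_singleton] at hy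
    rcases hy with hy | rfl
    · exact hp y hy
    · exact Set.mem_insert_of_mem _ hvm
  have claim : ∀ u v, G.Adj u v → u ∈ gammaSet G v0 b → v ∉ gammaSet G v0 b →
      c2 u ≠ c1 v := by
    intro u v hadj huS hvS
    by_cases hvtop : v ∈ topSet G v0
    · have hub : u ≠ b := by
        rintro rfl; exact hb.2 ⟨hb.1, v, hvtop, hadj⟩
      obtain ⟨p, hp⟩ := huS
      have huM : u ∈ midSet G v0 := by
        rcases hp u p.end_mem_support with h | h
        · exact absurd h hub
        · exact h
      obtain ⟨-, t', ht', hut'⟩ := huM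
      have h1 : c2 u ≠ c2 v0 := fun h => c2.valid hut' (h.trans (ht' c2).symm)
      rw [hvtop c1, hv]
      exact h1
    · by_cases hvmid : v ∈ midSet G v0
      · exact absurd (hmemS hadj huS hvmid) hvS
      have hvbot : v ∈ bottomSet G v0 := ⟨hvtop, hvmid⟩
      have hvb : v ≠ b := fun h => hvS (h ▸ hbS)
      by_cases hub : u = b
      · subst hub
        exact absurd hadj (hgood.1 _ hb _ hvbot)
      obtain ⟨p, hp⟩ := huS
      have huM : u ∈ midSet G v0 := by
        rcases hp u p.end_mem_support with h | h
        · exact absurd h hub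
        · exact h
      exfalso
      have hbrev : b ∈ p.reverse.support := by
        rw [SimpleGraph.Walk.support_reverse, List.mem_reverse]
        exact p.start_mem_support
      have key : ∃ q : G.Walk b u, q.support.count b = 1 ∧
          ∀ y ∈ q.support, y ∈ insert b (midSet G v0) := by
        refine ⟨(p.reverse.takeUntil b hbrev).reverse, ?_, ?_⟩
        · rw [SimpleGraph.Walk.support_reverse, List.count_reverse]
          exact SimpleGraph.Walk.count_support_takeUntil_eq_one _ hbrev
        · intro y hy
          rw [SimpleGraph.Walk.support_reverse, List.mem_reverse] at hy
          have hy2 : y ∈ p.reverse.support :=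
            SimpleGraph.Walk.support_takeUntil_subset _ hbrev hy
          rw [SimpleGraph.Walk.support_reverse, List.mem_reverse] at hy2
          exact hp y hy2
      obtain ⟨q, hqc, hqsub⟩ := key
      cases q with
      | nil => exact hub rfl
      | @cons _ m0 _ h1 q' =>
        rw [SimpleGraph.Walk.support_cons, List.count_cons_self] at hqc
        have hbq' : b ∉ q'.support := by
          rw [← List.count_eq_zero]
          omega
        have hq'sub : ∀ y ∈ q'.support, y ∈ midSet G v0 := by
          intro y hy
          have := hqsub y (by rw [SimpleGraph.Walk.support_cons]; exact List.mem_cons_of_mem _ hy)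
          rcases this with rfl | h
          · exact absurd hy hbq'
          · exact h
        have hm0 : m0 ∈ midSet G v0 := hq'sub m0 q'.start_mem_support
        have hmr : midReach G v0 m0 u := ⟨q', hq'sub⟩
        exact hvb ((hgood.2 b v m0 u hb hvbot hm0 huM h1 hadj.symm hmr).symm)
  refine ⟨SimpleGraph.Coloring.mk
    (fun w => if w ∈ gammaSet G v0 b then (c2 w : Fin 3) else c1 w) ?_,
    fun w hw => if_pos hw, fun w hw => if_neg hw⟩
  intro u v hadj
  by_cases huS : u ∈ gammaSet G v0 b <;> by_cases hvS : v ∈ gammaSet G v0 b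
  · simp only [if_pos huS, if_pos hvS]; exact c2.valid hadj
  · simp only [if_pos huS, if_neg hvS]; exact claim u v hadj huS hvS
  · simp only [if_neg huS, if_pos hvS]; exact (claim v u hadj.symm hvS huS).symm
  · simp only [if_neg huS, if_neg hvS]; exact c1.valid hadj

end auxLemmas

/-- If `G` is an almost good 3-colorable graph, `G1 = G ∪ {ab}` is 3-colorable where
`ab` is a non-edge of `G` with `a ∈ T_G`, and `x ≠ a` is a vertex with
`Γ_{G1}(x) ≠ Γ_G(x)`, then `b ∈ B_G`, `b ≠ x`, and `G` has an edge `ub` with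
`u ∈ V(Γ_G(x))`. -/


theorem statement_16 {V : Type*} (G : SimpleGraph V) (v0 : V)
    (hcol : G.Colorable 3) (hgood : almostGood G v0)
    (a b : V) (hab : a ≠ b) (haT : a ∈ topSet G v0) (hne : s(a, b) ∉ G.edgeSet)
    (hcol1 : (addEdge G s(a, b)).Colorable 3)
    (x : V) (hxa : x ≠ a)
    (hGamma : gammaSet (addEdge G s(a, b)) v0 x ≠ gammaSet G v0 x) :
    b ∈ bottomSet G v0 ∧ b ≠ x ∧ ∃ u ∈ gammaSet G v0 x, G.Adj u b := by
  classical
  have hle : G ≤ addEdge G s(a, b) := le_sup_left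
  obtain ⟨c0⟩ := hcol1
  have hcol1' : (addEdge G s(a, b)).Colorable 3 := ⟨c0⟩
  have haT1 : a ∈ topSet (addEdge G s(a, b)) v0 := topSet_le hle haT
  have hadjab : (addEdge G s(a, b)).Adj a b :=
    (addEdge_adj hab).2 (Or.inr (Or.inl ⟨rfl, rfl⟩))
  have hbT1 : b ∉ topSet (addEdge G s(a, b)) v0 := fun hbT1 =>
    c0.valid hadjab ((haT1 c0).trans (hbT1 c0).symm)
  have hbT : b ∉ topSet G v0 := fun h => hbT1 (topSet_le hle h)
  -- Step 1: b is not a middle vertex.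
  have hbM : b ∉ midSet G v0 := by
    intro hbM
    have hText : ∀ c : G.Coloring (Fin 3), c b ≠ c v0 := by
      intro c
      obtain ⟨-, t, htT, hadj⟩ := hbM
      exact fun h => c.valid hadj (h.trans (htT c).symm)
    have hTsub : topSet (addEdge G s(a, b)) v0 ⊆ topSet G v0 := by
      intro y hy c
      exact hy (extendColoring hab haT c (hText c))
    have hMeq : midSet (addEdge G s(a, b)) v0 = midSet G v0 := by
      ext m
      constructor
      · rintro ⟨hmT, t, htT, hadj⟩
        have hmT' : m ∉ topSet G v0 := fun h => hmT (topSet_le hle h)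
        rcases (addEdge_adj hab).1 hadj with h | ⟨rfl, rfl⟩ | ⟨rfl, rfl⟩
        · exact ⟨hmT', t, hTsub htT, h⟩
        · exact absurd htT hbT1
        · exact hbM
      · exact fun h => midSet_le hle hcol1' h
    apply hGamma
    apply Set.Subset.antisymm
    · rintro w ⟨p, hp⟩
      obtain ⟨q, hq⟩ := transferGamma hxa haT1 p hp
      refine ⟨q, ?_⟩
      intro z hz
      rw [hq] at hz
      have := hp z hz
      rwa [hMeq] at this
    · exact gammaSet_le hle hcol1' x
  have hbB : b ∈ bottomSet G v0 := ⟨hbT, hbM⟩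
  -- Step 2: find the first exit vertex z of a witnessing walk.
  have hgsub : ¬ gammaSet (addEdge G s(a, b)) v0 x ⊆ gammaSet G v0 x := fun h =>
    hGamma (Set.Subset.antisymm h (gammaSet_le hle hcol1' x))
  obtain ⟨w, hw1, hw2⟩ := Set.not_subset.1 hgsub
  obtain ⟨p, hp⟩ := hw1
  obtain ⟨q, hq⟩ := transferGamma hxa haT1 p hp
  have hbad : ∃ z ∈ q.support, z ∉ insert x (midSet G v0) := by
    by_contra hc
    push_neg at hc
    exact hw2 ⟨q, hc⟩
  obtain ⟨z', z, hadj', hzS, hzsup, qq, hqq⟩ :=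
    walk_first_exit q (Set.mem_insert x (midSet G v0)) hbad
  have hz'G : z' ∈ gammaSet G v0 x := ⟨qq, hqq⟩
  have hzx : z ≠ x := fun h => hzS (by rw [h]; exact Set.mem_insert x _)
  have hzM1 : z ∈ midSet (addEdge G s(a, b)) v0 := by
    have h := hp z (hq ▸ hzsup)
    rcases h with h | h
    · exact absurd h hzx
    · exact h
  have hzM : z ∉ midSet G v0 := fun h => hzS (Set.mem_insert_of_mem _ h)
  have hzT : z ∉ topSet G v0 := fun h => hzM1.1 (topSet_le hle h)
  have hzB : z ∈ bottomSet G v0 := ⟨hzT, hzM⟩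
  by_cases hzb : z = b
  · subst hzb
    exact ⟨hbB, hzx, z', hz'G, hadj'⟩
  exfalso
  have hza : z ≠ a := fun h => hzM1.1 (h ▸ haT1)
  obtain ⟨hzT1, t, htT1, hadj1⟩ := hzM1
  have hadjzt : G.Adj z t := by
    rcases (addEdge_adj hab).1 hadj1 with h | ⟨h1, h2⟩ | ⟨h1, h2⟩
    · exact h
    · exact absurd h1 hza
    · exact absurd h1 hzb
  have htT : t ∉ topSet G v0 := fun h => hzM ⟨hzT, t, h, hadjzt⟩
  have htM : t ∉ midSet G v0 := fun h => (midSet_le hle hcol1' h).1 htT1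
  have htB : t ∈ bottomSet G v0 := ⟨htT, htM⟩
  have htb : t ≠ b := fun h => hbT1 (h ▸ htT1)
  rcases hgood with hgoodG | ⟨e, heE, hgood'⟩
  · exact hgoodG.1 z hzB t htB hadjzt
  have hle' : G.deleteEdges {e} ≤ G := deleteEdges_le {e}
  have hbotsub : bottomSet G v0 ⊆ bottomSet (G.deleteEdges {e}) v0 := bot_anti hle'
  by_cases hezt : e = s(z, t)
  · -- the removed edge is exactly zt: use the mixing lemma
    obtain ⟨c1, hc1⟩ := not_forall.1 htT
    obtain ⟨c2, hc2⟩ := not_forall.1 hbT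
    set σ := Equiv.swap (c2 v0) (c1 v0) with hσ
    set c2' : G.Coloring (Fin 3) := SimpleGraph.Coloring.mk (fun w => σ (c2 w))
      (fun hadj h => c2.valid hadj (σ.injective h)) with hc2'def
    have hc2'v0 : c2' v0 = c1 v0 := Equiv.swap_apply_left _ _
    have hc2'b : c2' b ≠ c2' v0 := fun h => hc2 (σ.injective h)
    set d1 : (G.deleteEdges {e}).Coloring (Fin 3) := resCol hle' c1 with hd1
    set d2 : (G.deleteEdges {e}).Coloring (Fin 3) := resCol hle' c2' with hd2
    have hgb' : b ∈ bottomSet (G.deleteEdges {e}) v0 := hbotsub hbB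
    obtain ⟨c3, hc3S, hc3n⟩ := mixColorings hgood' hgb' d1 d2 hc2'v0.symm
    have hnotmem : ∀ y, y ∈ bottomSet (G.deleteEdges {e}) v0 → y ≠ b →
        y ∉ gammaSet (G.deleteEdges {e}) v0 b := by
      rintro y hyB hyb ⟨pp, hpp⟩
      rcases hpp y pp.end_mem_support with h | h
      · exact hyb h
      · exact hyB.2 h
    have hzS' : z ∉ gammaSet (G.deleteEdges {e}) v0 b := hnotmem z (hbotsub hzB) hzb
    have htS' : t ∉ gammaSet (G.deleteEdges {e}) v0 b := hnotmem t (hbotsub htB) htb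
    have hv0S' : v0 ∉ gammaSet (G.deleteEdges {e}) v0 b := by
      rintro ⟨pp, hpp⟩
      rcases hpp v0 pp.end_mem_support with h | h
      · exact hbT (h ▸ (fun c => rfl : v0 ∈ topSet G v0))
      · exact h.1 (fun c => rfl)
    have hc4valid : ∀ {u v : V}, G.Adj u v → c3 u ≠ c3 v := by
      intro u v huv
      by_cases hzt' : s(u, v) = e
      · rw [hezt] at hzt'
        rcases Sym2.eq_iff.1 hzt' with ⟨rfl, rfl⟩ | ⟨rfl, rfl⟩
        · rw [hc3n _ hzS', hc3n _ htS']
          exact c1.valid hadjzt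
        · rw [hc3n _ htS', hc3n _ hzS']
          exact c1.valid hadjzt.symm
      · refine c3.valid ?_
        rw [deleteEdges_adj]
        exact ⟨huv, by simpa using hzt'⟩
    set c4 : G.Coloring (Fin 3) := SimpleGraph.Coloring.mk c3 hc4valid with hc4
    have hc4b : c4 b ≠ c4 v0 := by
      have h1 : c4 b = c2' b := hc3S b ⟨SimpleGraph.Walk.nil, by simp⟩
      have h2 : c4 v0 = c1 v0 := hc3n v0 hv0S'
      rw [h1, h2, ← hc2'v0]
      exact hc2'b
    have hfin := htT1 (extendColoring hab haT c4 hc4b)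
    have h5 : c4 t = c1 t := hc3n t htS'
    have h6 : c4 v0 = c1 v0 := hc3n v0 hv0S'
    have : c1 t = c1 v0 := by
      have hft : (extendColoring hab haT c4 hc4b) t = c4 t := rfl
      have hfv : (extendColoring hab haT c4 hc4b) v0 = c4 v0 := rfl
      rw [hft, hfv, h5, h6] at hfin
      exact hfin
    exact hc1 this
  · -- the removed edge is not zt: P1 of the good subgraph applies
    have hadjzt' : (G.deleteEdges {e}).Adj z t := by
      rw [deleteEdges_adj]
      exact ⟨hadjzt, by simpa using fun h => hezt h.symm⟩
    exact hgood'.1 z (hbotsub hzB) t (hbotsub htB) hadjzt'
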